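/- Let S be a commutative semigroup with zero and G = Γ(S). Suppose there exist adjacent vertices a, b, a vertex s with N(s) = {a,b}, and a vertex z with d(s,z) = 3. Let L = {y : d(s,y) = 3}. Then no two vertices of L are adjacent in G, i.e., for all u, v ∈ L, uv ≠ 0. -/

import Mathlib

/-- A zero-divisor: a nonzero element annihilated by some nonzero element. -/
def IsZeroDivisorElem {S : Type*} [Mul S] [Zero S] (x : S) : Prop :=
  x ≠ 0 ∧ ∃ y : S, y ≠ 0 ∧ x * y = 0

/-- The zero-divisor graph Γ(S) of a commutative semigroup with zero:
vertices are the nonzero zero-divisors, two distinct vertices adjacent iff their product is 0. -/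
def zdGraph (S : Type*) [CommSemigroup S] [Zero S] :
    SimpleGraph {x : S // IsZeroDivisorElem x} where
  Adj a b := a ≠ b ∧ (a : S) * (b : S) = 0
  symm := by
    constructor
    rintro a b ⟨h1, h2⟩
    exact ⟨h1.symm, by rwa [mul_comm] at h2⟩
  loopless := by constructor; rintro a ⟨h, _⟩; exact h rfl

/-- An end vertex: a vertex of degree one (exactly one neighbor). -/
def IsEndVertex {V : Type*} (G : SimpleGraph V) (v : V) : Prop :=
  ∃! u, G.Adj v u

/-- An internal vertex: degree ≥ 2 and no neighbor of degree 1. -/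
def IsInternal {V : Type*} (G : SimpleGraph V) (v : V) : Prop :=
  (∃ u, G.Adj v u) ∧ ¬ IsEndVertex G v ∧ ∀ u, G.Adj v u → ¬ IsEndVertex G u

/-- C(a,b): the elements of S that are vertices whose neighborhood is exactly {a, b}. -/
def cSet (S : Type*) [CommSemigroup S] [Zero S]
    (a b : {x : S // IsZeroDivisorElem x}) : Set S :=
  {x : S | ∃ h : IsZeroDivisorElem x, (zdGraph S).neighborSet ⟨x, h⟩ = {a, b}}

/-- T_a: the elements of S that are end vertices adjacent to the vertex a. -/
def tSet (S : Type*) [CommSemigroup S] [Zero S]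
    (a : {x : S // IsZeroDivisorElem x}) : Set S :=
  {x : S | ∃ h : IsZeroDivisorElem x,
    (zdGraph S).Adj ⟨x, h⟩ a ∧ IsEndVertex (zdGraph S) ⟨x, h⟩}

/-- Under condition (△), no two vertices of L = {y : d(s,y) = 3} are adjacent,
i.e. their products are nonzero. -/
theorem stmt14 {S : Type*} [CommSemigroup S] [Zero S] (hz : ∀ x : S, 0 * x = 0)
    (a b s z : {t : S // IsZeroDivisorElem t})
    (hab : (zdGraph S).Adj a b)
    (hs : (zdGraph S).neighborSet s = {a, b})
    (hd : (zdGraph S).dist s z = 3) :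
    ∀ u v : {t : S // IsZeroDivisorElem t},
      (zdGraph S).dist s u = 3 → (zdGraph S).dist s v = 3 →
      (u : S) * (v : S) ≠ 0 := by
  intro u v hu hv huv
  have hadj_sa : (zdGraph S).Adj s a := by
    have : a ∈ (zdGraph S).neighborSet s := by rw [hs]; left; rfl
    exact this
  have hadj_sb : (zdGraph S).Adj s b := by
    have : b ∈ (zdGraph S).neighborSet s := by rw [hs]; right; rfl
    exact this
  -- helper: distance from s to any vertex adjacent to a or b is ≤ 2
  have dist2 : ∀ (x : {t : S // IsZeroDivisorElem t}) (c : {t : S // IsZeroDivisorElem t}),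
      (zdGraph S).Adj s c → (zdGraph S).Adj c x → (zdGraph S).dist s x ≤ 2 := by
    intro x c h1 h2
    have := (zdGraph S).dist_le (h1.toWalk.append h2.toWalk)
    simpa using this
  have dist1 : ∀ (c : {t : S // IsZeroDivisorElem t}),
      (zdGraph S).Adj s c → (zdGraph S).dist s c ≤ 1 := by
    intro c h1
    have := (zdGraph S).dist_le h1.toWalk
    simpa using this
  -- u * a ≠ 0
  have hua : (u : S) * (a : S) ≠ 0 := by
    intro h
    by_cases hue : u = a
    · have := dist1 u (hue ▸ hadj_sa); omega
    · have hadj : (zdGraph S).Adj a u := ⟨fun he => hue he.symm, by rwa [mul_comm]⟩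
      have := dist2 u a hadj_sa hadj; omega
  set w : S := (u : S) * (a : S) with hw
  have hsw : (s : S) * w = 0 := by
    rw [hw, mul_left_comm, hadj_sa.2, mul_comm, hz]
  have hvw : (v : S) * w = 0 := by
    rw [hw, ← mul_assoc, mul_comm (v : S) (u : S), huv, hz]
  by_cases hws : w = (s : S)
  · -- then v * s = 0, so v is adjacent to s, distance ≤ 1
    have hvs : v ≠ s := by intro h; rw [h, (zdGraph S).dist_self] at hv; omega
    have hadj : (zdGraph S).Adj s v := ⟨fun h => hvs h.symm, by
      rw [mul_comm]; rw [hws] at hvw; exact hvw⟩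
    have := dist1 v hadj; omega
  · have hwzd : IsZeroDivisorElem w :=
      ⟨hua, ⟨(s : S), s.2.1, by rw [mul_comm]; exact hsw⟩⟩
    have hadjW : (zdGraph S).Adj s ⟨w, hwzd⟩ := by
      refine ⟨fun h => hws ?_, hsw⟩
      exact (congrArg Subtype.val h).symm
    have hmem : (⟨w, hwzd⟩ : {t : S // IsZeroDivisorElem t}) ∈ ({a, b} : Set _) := by
      rw [← hs]; exact hadjW
    have key : ∀ c : {t : S // IsZeroDivisorElem t}, (zdGraph S).Adj s c →
        w = (c : S) → False := by
      intro c hsc hwc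
      have hvc : v ≠ c := by
        intro h
        have := dist1 v (h ▸ hsc); omega
      have hadj : (zdGraph S).Adj c v := ⟨fun he => hvc he.symm, by
        rw [mul_comm, ← hwc]; exact hvw⟩
      have := dist2 v c hsc hadj; omega
    rcases hmem with h | h
    · exact key a hadj_sa (congrArg Subtype.val h)
    · exact key b hadj_sb (congrArg Subtype.val h)
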